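/- Let G be a finite simple graph and suppose that x_1 x_2 is an edge of G. Then (I(G)^(2) : x_1 x_2) + (x_1, x_2) = (I(G)^{2} : x_1 x_2) + (x_1, x_2). -/

import Mathlib

open MvPolynomial

noncomputable section

/-! Generalities on graded pieces, Betti numbers and Castelnuovo–Mumford regularity
of homogeneous ideals in a polynomial ring, via the Koszul complex. -/

variable (K : Type) [Field K] (n : ℕ)

/-- The degree `d` graded piece of an ideal `I ⊆ K[x_1, …, x_n]`, as a `K`-subspace
(`⊥` for negative `d`). -/
def degPiece (I : Ideal (MvPolynomial (Fin n) K)) (d : ℤ) :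
    Submodule K (MvPolynomial (Fin n) K) :=
  if 0 ≤ d then (Submodule.restrictScalars K I) ⊓ homogeneousSubmodule (Fin n) K d.toNat
  else ⊥

theorem mulX_mem (I : Ideal (MvPolynomial (Fin n) K)) (k : Fin n) (d : ℤ)
    {x : MvPolynomial (Fin n) K} (hx : x ∈ degPiece K n I d) :
    (X k : MvPolynomial (Fin n) K) * x ∈ degPiece K n I (d + 1) := by
  by_cases h : 0 ≤ d
  · rw [degPiece, if_pos h, Submodule.mem_inf] at hx
    rw [degPiece, if_pos (by omega : (0:ℤ) ≤ d + 1), Submodule.mem_inf]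
    constructor
    · exact Ideal.mul_mem_left I _ hx.1
    · rw [mem_homogeneousSubmodule]
      have h2 := (isHomogeneous_X K k).mul ((mem_homogeneousSubmodule _ _).1 hx.2)
      have h3 : (d + 1).toNat = 1 + d.toNat := by omega
      rw [h3]
      exact h2
  · rw [degPiece, if_neg h, Submodule.mem_bot] at hx
    subst hx
    rw [mul_zero]
    exact Submodule.zero_mem _

/-- Multiplication by the variable `x_k`, as a map between graded pieces. -/
def mulXmap (I : Ideal (MvPolynomial (Fin n) K)) (k : Fin n) (d e : ℤ) (h : e = d + 1) :
    degPiece K n I d →ₗ[K] degPiece K n I e :=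
  LinearMap.restrict (LinearMap.mulLeft K (X k)) (by
    intro x hx
    subst h
    simpa using mulX_mem K n I k d hx)

/-- The differential, in internal degree `j`, of the complex obtained by tensoring the
ideal `I` with the Koszul complex on `x_1, …, x_n`; its homology computes
`Tor_i(I, K)_j`, whose dimension is the graded Betti number `β_{i,j}(I)`. -/
def koszulD (I : Ideal (MvPolynomial (Fin n) K)) (j i : ℕ) :
    ({T : Finset (Fin n) // T.card = i + 1} → degPiece K n I ((j : ℤ) - (i + 1)))
      →ₗ[K] ({T : Finset (Fin n) // T.card = i} → degPiece K n I ((j : ℤ) - i)) :=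
  LinearMap.pi fun T => ∑ k : Fin n,
    if h : k ∈ T.1 then 0
    else ((-1 : K) ^ (T.1.filter (fun l => l < k)).card) •
      ((mulXmap K n I k ((j : ℤ) - (i + 1)) ((j : ℤ) - i) (by ring)).comp
        (LinearMap.proj (⟨insert k T.1, by
          rw [Finset.card_insert_of_notMem h, T.2]⟩ : {T : Finset (Fin n) // T.card = i + 1})))

/-- The cycles of the (internal degree `j`) Koszul complex of `I` in homological degree `i`. -/
def kerChain (I : Ideal (MvPolynomial (Fin n) K)) (j : ℕ) :
    (i : ℕ) → Submodule K ({T : Finset (Fin n) // T.card = i} → degPiece K n I ((j : ℤ) - i))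
  | 0 => ⊤
  | (i + 1) => LinearMap.ker (koszulD K n I j i)

/-- The graded Betti number `β_{i,j}(I) = dim_K Tor_i(I, K)_j`. -/
def betti (I : Ideal (MvPolynomial (Fin n) K)) (i j : ℕ) : ℕ :=
  Module.finrank K (kerChain K n I j i) -
    Module.finrank K
      ((LinearMap.range (koszulD K n I j i) ⊓ kerChain K n I j i) : Submodule K _)

/-- The Castelnuovo–Mumford regularity `reg(I) = max { j - i | β_{i,j}(I) ≠ 0 }`. -/
def reg (I : Ideal (MvPolynomial (Fin n) K)) : ℤ :=
  sSup {r : ℤ | ∃ i j : ℕ, betti K n I i j ≠ 0 ∧ r = (j : ℤ) - i}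

/-- The squarefree part of a monomial ideal: the ideal generated by the squarefree
monomials belonging to it. -/
def sqfreePart (I : Ideal (MvPolynomial (Fin n) K)) : Ideal (MvPolynomial (Fin n) K) :=
  Ideal.span {m | m ∈ I ∧ ∃ A : Finset (Fin n), m = ∏ v ∈ A, X v}

/-- The `s`-th symbolic power of a (squarefree monomial) ideal:
the intersection of the `s`-th powers of its minimal primes; `S` for `s ≤ 0`. -/
def symbPow (I : Ideal (MvPolynomial (Fin n) K)) (s : ℤ) : Ideal (MvPolynomial (Fin n) K) :=
  if s ≤ 0 then ⊤ else ⨅ p ∈ I.minimalPrimes, p ^ s.toNat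

/-- `ssp I s` is `I^{s}`, the squarefree part of the `s`-th symbolic power of `I`. -/
def ssp (I : Ideal (MvPolynomial (Fin n) K)) (s : ℤ) : Ideal (MvPolynomial (Fin n) K) :=
  sqfreePart K n (symbPow K n I s)

/-- `sqPow I s` is `I^[s]`, the squarefree part of the ordinary power `I^s`. -/
def sqPow (I : Ideal (MvPolynomial (Fin n) K)) (s : ℕ) : Ideal (MvPolynomial (Fin n) K) :=
  sqfreePart K n (I ^ s)

/-- The height of an ideal: the minimum of the heights of its minimal primes. -/
def heightI (I : Ideal (MvPolynomial (Fin n) K)) : ℕ∞ :=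
  ⨅ p : I.minimalPrimes, Order.height (⟨p.1, p.2.1.1⟩ : PrimeSpectrum (MvPolynomial (Fin n) K))

/-- The colon ideal `(I : u)`. -/
def colonOf (I : Ideal (MvPolynomial (Fin n) K)) (u : MvPolynomial (Fin n) K) :
    Ideal (MvPolynomial (Fin n) K) :=
  Submodule.colon I (Ideal.span {u})

/-- `u` is a minimal monomial generator of the monomial ideal `I`:
`u` is a monomial belonging to `I` and `u/x_k ∉ I` for every variable `x_k` dividing `u`. -/
def IsMinGen (I : Ideal (MvPolynomial (Fin n) K)) (u : MvPolynomial (Fin n) K) : Prop :=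
  ∃ d : Fin n →₀ ℕ, u = monomial d (1 : K) ∧ u ∈ I ∧
    ∀ k : Fin n, d k ≠ 0 → monomial (d - Finsupp.single k 1) (1 : K) ∉ I

/-! Graph-theoretic notions. -/

/-- The graph obtained from `G` by deleting the vertices in `U` (and all edges meeting `U`),
on the same vertex set. -/
def delVerts (G : SimpleGraph (Fin n)) (U : Set (Fin n)) : SimpleGraph (Fin n) where
  Adj v w := G.Adj v w ∧ v ∉ U ∧ w ∉ U
  symm := ⟨fun _ _ h => ⟨h.1.symm, h.2.2, h.2.1⟩⟩
  loopless := ⟨fun v h => G.loopless.irrefl v h.1⟩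


/-- The edge ideal `I(G)` of a graph `G` on the vertex set `{x_1, …, x_n}`. -/
def edgeIdeal (G : SimpleGraph (Fin n)) : Ideal (MvPolynomial (Fin n) K) :=
  Ideal.span {m | ∃ v w, G.Adj v w ∧ m = X v * X w}

/-- `a`, `b` enumerate the endpoints of a matching of `G` of size `k`:
the edges `a i b i` are pairwise disjoint edges of `G`. -/
def IsMatching (G : SimpleGraph (Fin n)) (k : ℕ) (a b : Fin k → Fin n) : Prop :=
  (∀ i, G.Adj (a i) (b i)) ∧
    ∀ i j, i ≠ j → a i ≠ a j ∧ b i ≠ b j ∧ a i ≠ b j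

/-- The matching number `match(G)`. -/
def matchNum (G : SimpleGraph (Fin n)) : ℕ :=
  sSup {k | ∃ a b : Fin k → Fin n, IsMatching n G k a b}

/-- An induced matching: a matching such that no edge of `G` other than the matching edges
joins two of its vertices. -/
def IsInducedMatching (G : SimpleGraph (Fin n)) (k : ℕ) (a b : Fin k → Fin n) : Prop :=
  IsMatching n G k a b ∧ ∀ i j, i ≠ j →
    ¬ G.Adj (a i) (a j) ∧ ¬ G.Adj (a i) (b j) ∧ ¬ G.Adj (b i) (a j) ∧ ¬ G.Adj (b i) (b j)

/-- The induced matching number `ind-match(G)`. -/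
def indMatchNum (G : SimpleGraph (Fin n)) : ℕ :=
  sSup {k | ∃ a b : Fin k → Fin n, IsInducedMatching n G k a b}

/-- An ordered matching `{a_i b_i}`: the `a_i` form an independent set and
`a_i b_j ∈ E(G)` implies `i ≤ j`. -/
def IsOrderedMatching (G : SimpleGraph (Fin n)) (k : ℕ) (a b : Fin k → Fin n) : Prop :=
  IsMatching n G k a b ∧ (∀ i j, ¬ G.Adj (a i) (a j)) ∧ ∀ i j, G.Adj (a i) (b j) → i ≤ j

/-- The ordered matching number `ord-match(G)`. -/
def ordMatchNum (G : SimpleGraph (Fin n)) : ℕ :=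
  sSup {k | ∃ a b : Fin k → Fin n, IsOrderedMatching n G k a b}

/-- A graph is chordal if it has no induced cycle of length at least four. -/
def IsChordal (G : SimpleGraph (Fin n)) : Prop :=
  ∀ k : ℕ, 4 ≤ k → ∀ f : ZMod k → Fin n, Function.Injective f →
    ¬ (∀ i j : ZMod k, G.Adj (f i) (f j) ↔ (j = i + 1 ∨ i = j + 1))


/-- The star triangle graph with `t` triangles: vertex `0` is the common vertex of all the
triangles, and for `0 ≤ i < t` the vertices `2i+1`, `2i+2` are the other two vertices of the
`i`-th triangle. -/
def starTriangle (t : ℕ) : SimpleGraph (Fin (2 * t + 1)) where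
  Adj u v := u ≠ v ∧ ((u : ℕ) = 0 ∨ (v : ℕ) = 0 ∨ ((u : ℕ) - 1) / 2 = ((v : ℕ) - 1) / 2)
  symm := ⟨by
    intro u v h
    exact ⟨h.1.symm, by tauto⟩⟩
  loopless := ⟨by intro u h; exact h.1 rfl⟩

end

namespace SymbAux
open scoped Classical

variable {K : Type} [Field K] {n : ℕ}

noncomputable def phi (V : Set (Fin n)) : MvPolynomial (Fin n) K →ₐ[K] MvPolynomial (Fin n) K :=
  aeval (fun k => if k ∈ V then 0 else X k)

lemma phi_monomial (V : Set (Fin n)) (d : Fin n →₀ ℕ) (c : K) :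
    phi V (monomial d c) = if ∃ i ∈ V, d i ≠ 0 then 0 else monomial d c := by
  classical
  rw [phi, aeval_monomial]
  split_ifs with h
  · obtain ⟨i, hiV, hdi⟩ := h
    rw [Finsupp.prod, Finset.prod_eq_zero (Finsupp.mem_support_iff.2 hdi), mul_zero]
    rw [if_pos hiV, zero_pow hdi]
  · push_neg at h
    have h2 : (d.prod fun k e => (if k ∈ V then (0 : MvPolynomial (Fin n) K) else X k) ^ e)
        = d.prod fun k e => (X k) ^ e := by
      refine Finset.prod_congr rfl fun k hk => ?_
      show (if k ∈ V then (0 : MvPolynomial (Fin n) K) else X k) ^ d k = (X k) ^ d k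
      rw [if_neg fun hkV => (Finsupp.mem_support_iff.1 hk) (h k hkV)]
    rw [h2, monomial_eq, algebraMap_eq]

lemma mem_span_phi (V : Set (Fin n)) (f : MvPolynomial (Fin n) K) :
    f ∈ Ideal.span (X '' V : Set (MvPolynomial (Fin n) K)) ↔ phi (K := K) V f = 0 := by
  classical
  constructor
  · intro hf
    have hle : Ideal.span (X '' V : Set (MvPolynomial (Fin n) K)) ≤
        RingHom.ker (phi (K := K) (n := n) V).toRingHom := by
      rw [Ideal.span_le]
      rintro _ ⟨k, hk, rfl⟩
      simp [RingHom.mem_ker, phi, if_pos hk]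
    exact hle hf
  · intro hf
    rw [mem_ideal_span_X_image]
    by_contra hcon
    push_neg at hcon
    obtain ⟨m, hm, hmV⟩ := hcon
    have hcoeff : coeff m (phi (K := K) V f) = coeff m f := by
      conv_lhs => rw [f.as_sum, map_sum]
      rw [coeff_sum]
      rw [Finset.sum_eq_single m]
      · rw [phi_monomial, if_neg, coeff_monomial, if_pos rfl]
        rintro ⟨i, hi, hne⟩
        exact hne (hmV i hi)
      · intro d _ hdm
        rw [phi_monomial]
        split_ifs with h
        · rw [coeff_zero]
        · rw [coeff_monomial, if_neg hdm]
      · intro hmf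
        exact absurd hm hmf
    rw [hf, coeff_zero] at hcoeff
    exact (MvPolynomial.mem_support_iff.1 hm) hcoeff.symm

lemma span_X_prime (V : Set (Fin n)) :
    (Ideal.span (X '' V : Set (MvPolynomial (Fin n) K))).IsPrime := by
  rw [Ideal.isPrime_iff]
  constructor
  · intro h
    have h1 : (1 : MvPolynomial (Fin n) K) ∈
        Ideal.span (X '' V : Set (MvPolynomial (Fin n) K)) := h ▸ Submodule.mem_top
    rw [mem_span_phi, map_one] at h1
    exact one_ne_zero h1
  · intro f g hfg
    rw [mem_span_phi, map_mul] at hfg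
    rw [mem_span_phi, mem_span_phi]
    exact mul_eq_zero.mp hfg

lemma X_mem_span_X (V : Set (Fin n)) (k : Fin n) :
    (X k : MvPolynomial (Fin n) K) ∈ Ideal.span (X '' V : Set (MvPolynomial (Fin n) K))
      ↔ k ∈ V := by
  constructor
  · intro h
    rw [mem_ideal_span_X_image] at h
    obtain ⟨i, hi, hne⟩ := h (Finsupp.single k 1) (by rw [support_X]; simp)
    rw [Finsupp.single_apply] at hne
    by_cases hki : k = i
    · exact hki ▸ hi
    · simp [hki] at hne
  · intro h
    exact Ideal.subset_span ⟨k, h, rfl⟩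

lemma X_eq (k : Fin n) : (X k : MvPolynomial (Fin n) K) = monomial (Finsupp.single k 1) 1 := rfl

lemma mem_span_X_sq (V : Set (Fin n)) (f : MvPolynomial (Fin n) K) :
    f ∈ (Ideal.span (X '' V : Set (MvPolynomial (Fin n) K))) ^ 2 ↔
      ∀ m ∈ f.support, ∃ a ∈ V, ∃ b ∈ V,
        Finsupp.single a 1 + Finsupp.single b 1 ≤ m := by
  classical
  have h2 : (Ideal.span (X '' V : Set (MvPolynomial (Fin n) K))) ^ 2 =
      Ideal.span ((fun s => monomial s (1 : K)) ''
        {s | ∃ a ∈ V, ∃ b ∈ V, s = Finsupp.single a 1 + Finsupp.single b 1}) := by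
    rw [pow_two, Ideal.span_mul_span']
    congr 1
    ext u
    constructor
    · rintro ⟨-, ⟨a, ha, rfl⟩, -, ⟨b, hb, rfl⟩, rfl⟩
      exact ⟨_, ⟨a, ha, b, hb, rfl⟩, by simp [X_eq, monomial_mul]⟩
    · rintro ⟨s, ⟨a, ha, b, hb, rfl⟩, rfl⟩
      exact ⟨X a, ⟨a, ha, rfl⟩, X b, ⟨b, hb, rfl⟩, by simp [X_eq, monomial_mul]⟩
  rw [h2, mem_ideal_span_monomial_image]
  constructor <;> intro h m hm
  · obtain ⟨si, ⟨a, ha, b, hb, rfl⟩, hle⟩ := h m hm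
    exact ⟨a, ha, b, hb, hle⟩
  · obtain ⟨a, ha, b, hb, hle⟩ := h m hm
    exact ⟨_, ⟨a, ha, b, hb, rfl⟩, hle⟩

end SymbAux

section SymbAux2
open SymbAux

variable {K : Type} [Field K] {n : ℕ}

lemma minimal_prime_eq (G : SimpleGraph (Fin n)) (p : Ideal (MvPolynomial (Fin n) K))
    (hp : p ∈ (edgeIdeal K n G).minimalPrimes) :
    p = Ideal.span (X '' {k | (X k : MvPolynomial (Fin n) K) ∈ p}) := by
  set V : Set (Fin n) := {k | (X k : MvPolynomial (Fin n) K) ∈ p} with hV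
  have hqp : Ideal.span (X '' V : Set (MvPolynomial (Fin n) K)) ≤ p := by
    rw [Ideal.span_le]
    rintro _ ⟨k, hk, rfl⟩
    exact hk
  have hIq : edgeIdeal K n G ≤ Ideal.span (X '' V : Set (MvPolynomial (Fin n) K)) := by
    rw [edgeIdeal, Ideal.span_le]
    rintro m ⟨v, w, hvw, rfl⟩
    have hmem : (X v : MvPolynomial (Fin n) K) * X w ∈ p :=
      hp.1.2 (Ideal.subset_span ⟨v, w, hvw, rfl⟩)
    rcases hp.1.1.mem_or_mem hmem with h | h
    · exact Ideal.mul_mem_right _ _ (Ideal.subset_span ⟨v, h, rfl⟩)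
    · exact Ideal.mul_mem_left _ _ (Ideal.subset_span ⟨w, h, rfl⟩)
  exact le_antisymm (hp.2 ⟨span_X_prime V, hIq⟩ hqp) hqp

lemma mem_symbPow2 (I : Ideal (MvPolynomial (Fin n) K)) (f : MvPolynomial (Fin n) K) :
    f ∈ symbPow K n I 2 ↔ ∀ p ∈ I.minimalPrimes, f ∈ p ^ 2 := by
  rw [symbPow, if_neg (by norm_num)]
  have h2 : ((2 : ℤ)).toNat = 2 := rfl
  rw [h2]
  simp [Submodule.mem_iInf]

lemma mem_colonOf (I : Ideal (MvPolynomial (Fin n) K)) (u f : MvPolynomial (Fin n) K) :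
    f ∈ colonOf K n I u ↔ f * u ∈ I := by
  rw [colonOf]
  exact Ideal.mem_colon_span_singleton

lemma key_monomial (G : SimpleGraph (Fin n)) (x1 x2 : Fin n) (hadj : G.Adj x1 x2)
    (f : MvPolynomial (Fin n) K)
    (hf : f * (X x1 * X x2) ∈ symbPow K n (edgeIdeal K n G) 2)
    (d : Fin n →₀ ℕ) (hd : coeff d f ≠ 0) (h1 : d x1 = 0) (h2 : d x2 = 0) (c : K) :
    monomial d c * (X x1 * X x2) ∈ ssp K n (edgeIdeal K n G) 2 := by
  classical
  have hx12ne : x1 ≠ x2 := hadj.ne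
  set e12 : Fin n →₀ ℕ := Finsupp.single x1 1 + Finsupp.single x2 1 with he12
  have hXX : (X x1 : MvPolynomial (Fin n) K) * X x2 = monomial e12 1 := by
    simp [X_eq, monomial_mul, he12]
  set A : Finset (Fin n) := insert x1 (insert x2 d.support) with hA
  set t : Fin n →₀ ℕ := ∑ v ∈ A, Finsupp.single v 1 with ht
  have ht_apply : ∀ k, t k = if k ∈ A then 1 else 0 := by
    intro k
    rw [ht, Finset.sum_apply']
    simp_rw [Finsupp.single_apply]
    rw [Finset.sum_ite_eq' A k (fun _ => 1)]
  have hprod : (∏ v ∈ A, X v : MvPolynomial (Fin n) K) = monomial t 1 := by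
    rw [ht]
    induction A using Finset.induction with
    | empty =>
        rw [Finset.prod_empty, Finset.sum_empty, monomial_zero', C_1]
    | insert _ _ hnotmem ih =>
        rw [Finset.prod_insert hnotmem, Finset.sum_insert hnotmem, ih, X_eq,
          monomial_mul, one_mul]
  have ht_mem : ∀ k : Fin n, k ∈ A → t k = 1 := fun k hk => by
    rw [ht_apply, if_pos hk]
  have hle_t : ∀ u v : Fin n, u ≠ v → u ∈ A → v ∈ A →
      Finsupp.single u 1 + Finsupp.single v 1 ≤ t := by
    intro u v huv hu hv k
    rw [Finsupp.add_apply, Finsupp.single_apply, Finsupp.single_apply, ht_apply]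
    by_cases hku : u = k
    · rw [if_pos hku, if_neg (fun h => huv (hku.trans h.symm)), if_pos (hku ▸ hu)]
      omega
    · rw [if_neg hku]
      by_cases hkv : v = k
      · rw [if_pos hkv, if_pos (hkv ▸ hv)]
      · rw [if_neg hkv]
        split <;> omega
  have he12_apply : ∀ k, e12 k = (if x1 = k then 1 else 0) + (if x2 = k then 1 else 0) := by
    intro k
    rw [he12, Finsupp.add_apply, Finsupp.single_apply, Finsupp.single_apply]
  -- the squarefree monomial is in the symbolic square
  have hwmem : (monomial t (1 : K) : MvPolynomial (Fin n) K) ∈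
      symbPow K n (edgeIdeal K n G) 2 := by
    rw [mem_symbPow2]
    intro p hp
    have hpeq := minimal_prime_eq G p hp
    set V : Set (Fin n) := {k | (X k : MvPolynomial (Fin n) K) ∈ p} with hV
    rw [hpeq, mem_span_X_sq]
    intro m hm
    rw [support_monomial, if_neg one_ne_zero, Finset.mem_singleton] at hm
    subst hm
    have hx12V : x1 ∈ V ∨ x2 ∈ V := by
      have hmem : (X x1 : MvPolynomial (Fin n) K) * X x2 ∈ p :=
        hp.1.2 (Ideal.subset_span ⟨x1, x2, hadj, rfl⟩)
      exact hp.1.1.mem_or_mem hmem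
    have hfp := (mem_symbPow2 _ _).1 hf p hp
    rw [hpeq, mem_span_X_sq] at hfp
    have hcoeff : coeff (d + e12) (f * (X x1 * X x2)) = coeff d f := by
      rw [hXX, coeff_mul_monomial, mul_one]
    obtain ⟨a, ha, b, hb, hab⟩ := hfp (d + e12)
      (MvPolynomial.mem_support_iff.2 (by rw [hcoeff]; exact hd))
    have hval : ∀ k : Fin n,
        Finsupp.single a 1 k + Finsupp.single b 1 k ≤ d k + e12 k := by
      intro k
      have h := hab k
      rwa [Finsupp.add_apply, Finsupp.add_apply] at h
    by_cases hcase : ∃ cc ∈ d.support, cc ∈ V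
    · obtain ⟨cc, hccs, hccV⟩ := hcase
      have hccA : cc ∈ A := by
        rw [hA]; exact Finset.mem_insert_of_mem (Finset.mem_insert_of_mem hccs)
      have hcc1 : cc ≠ x1 := fun h => (Finsupp.mem_support_iff.1 hccs) (h ▸ h1)
      have hcc2 : cc ≠ x2 := fun h => (Finsupp.mem_support_iff.1 hccs) (h ▸ h2)
      have hx1A : x1 ∈ A := by rw [hA]; exact Finset.mem_insert_self _ _
      have hx2A : x2 ∈ A := by
        rw [hA]; exact Finset.mem_insert_of_mem (Finset.mem_insert_self _ _)
      rcases hx12V with hx | hx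
      · exact ⟨cc, hccV, x1, hx, hle_t cc x1 hcc1 hccA hx1A⟩
      · exact ⟨cc, hccV, x2, hx, hle_t cc x2 hcc2 hccA hx2A⟩
    · push_neg at hcase
      have hda : d a = 0 := by
        by_contra hda
        exact hcase a (Finsupp.mem_support_iff.2 hda) ha
      have hdb : d b = 0 := by
        by_contra hdb
        exact hcase b (Finsupp.mem_support_iff.2 hdb) hb
      have he12le : ∀ k, e12 k ≤ 1 := by
        intro k
        rw [he12_apply]
        by_cases hh1 : x1 = k
        · rw [if_pos hh1, if_neg (fun h => hx12ne (hh1.trans h.symm))]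
        · rw [if_neg hh1]
          split <;> omega
      have hane : a ≠ b := by
        intro h
        subst h
        have h2a := hval a
        rw [Finsupp.single_eq_same] at h2a
        have := he12le a
        omega
      have haA : a = x1 ∨ a = x2 := by
        by_contra hcon
        push_neg at hcon
        have h1a := hval a
        rw [Finsupp.single_eq_same] at h1a
        have : e12 a = 0 := by
          rw [he12_apply, if_neg (fun h => hcon.1 h.symm), if_neg (fun h => hcon.2 h.symm)]
        omega
      have hbA : b = x1 ∨ b = x2 := by
        by_contra hcon
        push_neg at hcon
        have h1b := hval b
        rw [Finsupp.single_eq_same] at h1b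
        have : e12 b = 0 := by
          rw [he12_apply, if_neg (fun h => hcon.1 h.symm), if_neg (fun h => hcon.2 h.symm)]
        omega
      have haA' : a ∈ A := by
        rcases haA with h | h <;> rw [h, hA]
        · exact Finset.mem_insert_self _ _
        · exact Finset.mem_insert_of_mem (Finset.mem_insert_self _ _)
      have hbA' : b ∈ A := by
        rcases hbA with h | h <;> rw [h, hA]
        · exact Finset.mem_insert_self _ _
        · exact Finset.mem_insert_of_mem (Finset.mem_insert_self _ _)
      exact ⟨a, ha, b, hb, hle_t a b hane haA' hbA'⟩
  -- t ≤ d + e12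
  have ht_le : t ≤ d + e12 := by
    intro k
    rw [ht_apply, Finsupp.add_apply, he12_apply]
    by_cases hk : k ∈ A
    · rw [if_pos hk]
      by_cases e1 : x1 = k
      · rw [if_pos e1]; omega
      · rw [if_neg e1]
        by_cases e2 : x2 = k
        · rw [if_pos e2]; omega
        · rw [if_neg e2]
          have hks : k ∈ d.support := by
            rw [hA] at hk
            rcases Finset.mem_insert.1 hk with h | h
            · exact absurd h.symm e1
            rcases Finset.mem_insert.1 h with h | h
            · exact absurd h.symm e2
            · exact h
          have := Finsupp.mem_support_iff.1 hks
          omega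
    · rw [if_neg hk]; omega
  -- assemble
  have hfactor : monomial d c * (X x1 * X x2) =
      monomial (d + e12 - t) c * monomial t 1 := by
    rw [hXX, monomial_mul, monomial_mul, mul_one, tsub_add_cancel_of_le ht_le]
  rw [hfactor]
  refine Ideal.mul_mem_left _ _ (Ideal.subset_span ⟨hwmem, A, hprod.symm⟩)

end SymbAux2

/-- For any edge `x_1 x_2` of `G`,
`(I(G)^(2) : x_1 x_2) + (x_1, x_2) = (I(G)^{2} : x_1 x_2) + (x_1, x_2)`. -/
theorem symbPow_colon_add_eq_ssp_colon_add
    (K : Type) [Field K] (n : ℕ) (G : SimpleGraph (Fin n)) (x1 x2 : Fin n)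
    (hadj : G.Adj x1 x2) :
    colonOf K n (symbPow K n (edgeIdeal K n G) 2)
        ((X x1 : MvPolynomial (Fin n) K) * X x2) +
        Ideal.span {(X x1 : MvPolynomial (Fin n) K), X x2} =
      colonOf K n (ssp K n (edgeIdeal K n G) 2)
        ((X x1 : MvPolynomial (Fin n) K) * X x2) +
        Ideal.span {(X x1 : MvPolynomial (Fin n) K), X x2} := by
  classical
  open SymbAux in
  apply le_antisymm
  · rw [Submodule.add_eq_sup, Submodule.add_eq_sup]
    refine sup_le ?_ le_sup_right
    intro f hf
    rw [mem_colonOf] at hf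
    rw [Submodule.mem_sup]
    set s := f.support.filter (fun d => d x1 = 0 ∧ d x2 = 0) with hs
    refine ⟨∑ d ∈ s, monomial d (coeff d f), ?_,
      ∑ d ∈ f.support.filter (fun d => ¬(d x1 = 0 ∧ d x2 = 0)), monomial d (coeff d f), ?_, ?_⟩
    · rw [mem_colonOf, Finset.sum_mul]
      refine Ideal.sum_mem _ fun d hd => ?_
      rw [hs, Finset.mem_filter] at hd
      exact key_monomial G x1 x2 hadj f hf d (MvPolynomial.mem_support_iff.1 hd.1)
        hd.2.1 hd.2.2 _
    · refine Ideal.sum_mem _ fun d hd => ?_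
      rw [Finset.mem_filter] at hd
      rcases Decidable.not_and_iff_or_not.1 hd.2 with h | h
      · have hle : Finsupp.single x1 1 ≤ d := Finsupp.single_le_iff.2 (by omega)
        have : monomial d (coeff d f) =
            monomial (d - Finsupp.single x1 1) (coeff d f) * X x1 := by
          rw [X_eq, monomial_mul, mul_one, tsub_add_cancel_of_le hle]
        rw [this]
        exact Ideal.mul_mem_left _ _
          (Ideal.subset_span (Set.mem_insert _ _))
      · have hle : Finsupp.single x2 1 ≤ d := Finsupp.single_le_iff.2 (by omega)
        have : monomial d (coeff d f) =
            monomial (d - Finsupp.single x2 1) (coeff d f) * X x2 := by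
          rw [X_eq, monomial_mul, mul_one, tsub_add_cancel_of_le hle]
        rw [this]
        exact Ideal.mul_mem_left _ _
          (Ideal.subset_span (Set.mem_insert_of_mem _ (Set.mem_singleton _)))
    · rw [Finset.sum_filter_add_sum_filter_not]
      exact f.as_sum.symm
  · rw [Submodule.add_eq_sup, Submodule.add_eq_sup]
    refine sup_le (le_trans ?_ le_sup_left) le_sup_right
    intro f hf
    rw [mem_colonOf] at hf ⊢
    have hle : ssp K n (edgeIdeal K n G) 2 ≤ symbPow K n (edgeIdeal K n G) 2 := by
      rw [ssp, sqfreePart, Ideal.span_le]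
      exact fun m hm => hm.1
    exact hle hf
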